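/- For every finite simple connected vertex-transitive graph Γ of valence 3, the ratio η(Γ) = |V(Γ)| / max{ord(g) : g ∈ Aut(Γ)} satisfies η(Γ) ≥ 1; that is, no automorphism of Γ has order exceeding the number of vertices. -/

import Mathlib

open Function

set_option linter.unusedSectionVars false
set_option maxHeartbeats 1000000

section Aux

variable {V : Type*} [Fintype V] {Γ : SimpleGraph V} {g : Equiv.Perm V}

private lemma myMP_pos (v : V) : 0 < minimalPeriod (⇑g) v := by
  apply Function.IsPeriodicPt.minimalPeriod_pos (orderOf_pos g)
  show (⇑g)^[orderOf g] v = v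
  rw [Equiv.Perm.iterate_eq_pow, pow_orderOf_eq_one]; rfl

private lemma myMP_dvd (v : V) : minimalPeriod (⇑g) v ∣ orderOf g := by
  apply Function.IsPeriodicPt.minimalPeriod_dvd
  show (⇑g)^[orderOf g] v = v
  rw [Equiv.Perm.iterate_eq_pow, pow_orderOf_eq_one]; rfl

private lemma myPow_fix_iff (v : V) (k : ℕ) :
    (g ^ k) v = v ↔ minimalPeriod (⇑g) v ∣ k := by
  rw [← Function.isPeriodicPt_iff_minimalPeriod_dvd]
  unfold Function.IsPeriodicPt Function.IsFixedPt
  rw [Equiv.Perm.iterate_eq_pow]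

private lemma myMP_mem (v : V) : v ∈ periodicPts (⇑g) :=
  ⟨orderOf g, orderOf_pos g, by
    show (⇑g)^[orderOf g] v = v
    rw [Equiv.Perm.iterate_eq_pow, pow_orderOf_eq_one]; rfl⟩

private lemma myMP_pow_apply (v : V) (k : ℕ) :
    minimalPeriod (⇑g) ((g ^ k) v) = minimalPeriod (⇑g) v := by
  have := Function.minimalPeriod_apply_iterate (myMP_mem (g := g) v) k
  rwa [Equiv.Perm.iterate_eq_pow] at this

private lemma myPow_adj (hg : ∀ a b : V, Γ.Adj (g a) (g b) ↔ Γ.Adj a b)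
    (k : ℕ) (a b : V) : Γ.Adj ((g ^ k) a) ((g ^ k) b) ↔ Γ.Adj a b := by
  induction k with
  | zero => simp
  | succ n ih =>
    rw [pow_succ', Equiv.Perm.mul_apply, Equiv.Perm.mul_apply, hg]; exact ih

/-- the whole ⟨g^(ℓ v)⟩-orbit of a neighbour stays in the neighbourhood -/
private lemma myOrbit_mem_nbhd (hg : ∀ a b : V, Γ.Adj (g a) (g b) ↔ Γ.Adj a b)
    {v w : V} (h : Γ.Adj v w) (k : ℕ) :
    Γ.Adj v ((g ^ (k * minimalPeriod (⇑g) v)) w) := by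
  have hv : (g ^ (k * minimalPeriod (⇑g) v)) v = v :=
    (myPow_fix_iff v _).2 ⟨k, Nat.mul_comm k _⟩
  have := (myPow_adj hg (k * minimalPeriod (⇑g) v) v w).2 h
  rwa [hv] at this

/-- distinctness criterion for orbit points -/
private lemma myOrbit_ne
    {v w : V} {i j : ℕ} (hij : i < j)
    (hq : ¬ (minimalPeriod (⇑g) w ∣ (j - i) * minimalPeriod (⇑g) v)) :
    (g ^ (i * minimalPeriod (⇑g) v)) w ≠ (g ^ (j * minimalPeriod (⇑g) v)) w := by
  intro he
  apply hq
  have hj : j * minimalPeriod (⇑g) v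
      = (j - i) * minimalPeriod (⇑g) v + i * minimalPeriod (⇑g) v := by
    rw [← Nat.add_mul, Nat.sub_add_cancel hij.le]
  rw [hj, pow_add, Equiv.Perm.mul_apply] at he
  have : (g ^ ((j - i) * minimalPeriod (⇑g) v)) ((g ^ (i * minimalPeriod (⇑g) v)) w)
      = (g ^ (i * minimalPeriod (⇑g) v)) w := he.symm
  rw [myPow_fix_iff, myMP_pow_apply] at this
  exact this

private lemma myQ_dvd {a b r : ℕ} (ha : 0 < a) (hr : b ∣ r * a) :
    b / Nat.gcd a b ∣ r := by
  have hd : 0 < Nat.gcd a b := Nat.gcd_pos_of_pos_left _ ha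
  have hco : Nat.Coprime (b / Nat.gcd a b) (a / Nat.gcd a b) :=
    (Nat.coprime_div_gcd_div_gcd hd).symm
  have hdvd : (b / Nat.gcd a b) ∣ r * (a / Nat.gcd a b) := by
    have h1 : Nat.gcd a b * (b / Nat.gcd a b) ∣ Nat.gcd a b * (r * (a / Nat.gcd a b)) := by
      rw [Nat.mul_div_cancel' (Nat.gcd_dvd_right a b)]
      rw [mul_comm r, ← mul_assoc, Nat.mul_div_cancel' (Nat.gcd_dvd_left a b), mul_comm a r]
      exact hr
    exact (mul_dvd_mul_iff_left hd.ne').1 h1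
  exact Nat.Coprime.dvd_of_dvd_mul_right hco hdvd

/-- no orbit-multiplicity step: if `q ∣ r` fails for all `1 ≤ r ≤ n` then points distinct -/
private lemma myNotDvd {v w : V} (hq : ∀ r, 0 < r → r ≤ 3 →
      ¬ ((minimalPeriod (⇑g) w) / Nat.gcd (minimalPeriod (⇑g) v) (minimalPeriod (⇑g) w) ∣ r))
    {i j : ℕ} (hij : i < j) (hj : j ≤ 3) :
    (g ^ (i * minimalPeriod (⇑g) v)) w ≠ (g ^ (j * minimalPeriod (⇑g) v)) w := by
  apply myOrbit_ne hij
  intro hdvd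
  exact hq (j - i) (by omega) (by omega) (myQ_dvd (myMP_pos v) hdvd)

/-- valence-3: adjacent orbits have `ℓ w ≤ 3 * gcd` -/
private lemma myQ_le3 (hcubic : ∀ v : V, (Γ.neighborSet v).ncard = 3)
    (hg : ∀ a b : V, Γ.Adj (g a) (g b) ↔ Γ.Adj a b)
    {v w : V} (h : Γ.Adj v w) :
    minimalPeriod (⇑g) w ≤ 3 * Nat.gcd (minimalPeriod (⇑g) v) (minimalPeriod (⇑g) w) := by
  classical
  by_contra hgt
  push_neg at hgt
  set a := minimalPeriod (⇑g) v with ha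
  set b := minimalPeriod (⇑g) w with hb
  set d := Nat.gcd a b with hd
  have hdb : d ∣ b := Nat.gcd_dvd_right a b
  have hq4 : 4 ≤ b / d := by
    have hd0 : 0 < d := Nat.gcd_pos_of_pos_left _ (myMP_pos v)
    rcases hdb with ⟨q, hqe⟩
    rw [hqe, Nat.mul_div_cancel_left _ hd0]
    by_contra hlt
    push_neg at hlt
    interval_cases q <;> omega
  have hnd : ∀ r, 0 < r → r ≤ 3 → ¬ (b / d ∣ r) := by
    intro r hr1 hr3 hdvd
    have := Nat.le_of_dvd hr1 hdvd
    omega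
  -- four distinct neighbours
  let e : Fin 4 → V := fun i => (g ^ ((i : ℕ) * a)) w
  have hinj : Function.Injective e := by
    intro i j hij
    by_contra hne
    rcases Nat.lt_or_ge (i : ℕ) (j : ℕ) with hlt | hge
    · exact myNotDvd hnd hlt (by omega) hij
    · have hlt : (j : ℕ) < (i : ℕ) := by
        rcases Nat.lt_or_ge (j : ℕ) (i : ℕ) with h' | h'
        · exact h'
        · exact absurd (Fin.ext (by omega)) hne
      exact myNotDvd hnd hlt (by omega) hij.symm
  have hmem : ∀ i : Fin 4, e i ∈ Γ.neighborSet v := fun i =>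
    myOrbit_mem_nbhd hg h (i : ℕ)
  have hcard : (Finset.univ.image e).card = 4 := by
    rw [Finset.card_image_of_injective _ hinj, Finset.card_univ, Fintype.card_fin]
  have hsub : ↑(Finset.univ.image e) ⊆ Γ.neighborSet v := by
    intro x hx
    simp only [Finset.coe_image, Set.mem_image, Finset.mem_coe] at hx
    rcases hx with ⟨i, _, rfl⟩
    exact hmem i
  have := Set.ncard_le_ncard hsub (Set.toFinite _)
  rw [Set.ncard_coe_finset, hcard, hcubic v] at this
  omega

/-- rigidity: if `ℓ w = 3 * gcd` then N(v) is exactly the ⟨g^(ℓ v)⟩-orbit of w -/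
private lemma myQ3_rigid (hcubic : ∀ v : V, (Γ.neighborSet v).ncard = 3)
    (hg : ∀ a b : V, Γ.Adj (g a) (g b) ↔ Γ.Adj a b)
    {v w : V} (h : Γ.Adj v w)
    (h3 : minimalPeriod (⇑g) w
        = 3 * Nat.gcd (minimalPeriod (⇑g) v) (minimalPeriod (⇑g) w)) :
    ∀ x ∈ Γ.neighborSet v, ∃ k : ℕ, x = (g ^ (k * minimalPeriod (⇑g) v)) w := by
  classical
  set a := minimalPeriod (⇑g) v with ha
  set b := minimalPeriod (⇑g) w with hb
  set d := Nat.gcd a b with hd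
  have hd0 : 0 < d := Nat.gcd_pos_of_pos_left _ (myMP_pos v)
  have hq3 : b / d = 3 := by rw [h3, mul_comm]; exact Nat.mul_div_cancel_left _ hd0
  have hnd : ∀ r, 0 < r → r ≤ 3 → ¬ (b / d ∣ r) → True := fun _ _ _ _ => trivial
  have hnd' : ∀ r, 0 < r → r < 3 → ¬ (b / d ∣ r) := by
    intro r hr1 hr3 hdvd
    have := Nat.le_of_dvd hr1 hdvd
    omega
  let e : Fin 3 → V := fun i => (g ^ ((i : ℕ) * a)) w
  have hinj : Function.Injective e := by
    intro i j hij
    by_contra hne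
    rcases Nat.lt_or_ge (i : ℕ) (j : ℕ) with hlt | hge
    · refine myOrbit_ne hlt ?_ hij
      intro hdvd
      exact hnd' ((j:ℕ) - i) (by omega) (by omega) (myQ_dvd (myMP_pos v) hdvd)
    · have hlt : (j : ℕ) < (i : ℕ) := by
        rcases Nat.lt_or_ge (j : ℕ) (i : ℕ) with h' | h'
        · exact h'
        · exact absurd (Fin.ext (by omega)) hne
      refine absurd hij.symm (myOrbit_ne hlt ?_)
      intro hdvd
      exact hnd' ((i:ℕ) - j) (by omega) (by omega) (myQ_dvd (myMP_pos v) hdvd)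
  have hmem : ∀ i : Fin 3, e i ∈ Γ.neighborSet v := fun i =>
    myOrbit_mem_nbhd hg h (i : ℕ)
  have hsub : ↑(Finset.univ.image e) ⊆ Γ.neighborSet v := by
    intro x hx
    simp only [Finset.coe_image, Set.mem_image, Finset.mem_coe] at hx
    rcases hx with ⟨i, _, rfl⟩
    exact hmem i
  have hcard : (Finset.univ.image e).card = 3 := by
    rw [Finset.card_image_of_injective _ hinj, Finset.card_univ, Fintype.card_fin]
  have heq : ↑(Finset.univ.image e) = Γ.neighborSet v := by
    apply Set.eq_of_subset_of_ncard_le hsub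
    rw [Set.ncard_coe_finset, hcard, hcubic v]
  intro x hx
  rw [← heq] at hx
  simp only [Finset.coe_image, Set.mem_image, Finset.mem_coe] at hx
  rcases hx with ⟨i, _, rfl⟩
  exact ⟨(i : ℕ), rfl⟩

/-- if `g^k` fixes all neighbours of `v` then `g^k v` has the same neighbourhood -/
private lemma myNbhd_eq (hg : ∀ a b : V, Γ.Adj (g a) (g b) ↔ Γ.Adj a b)
    {v : V} {k : ℕ} (hfix : ∀ x ∈ Γ.neighborSet v, (g ^ k) x = x) :
    Γ.neighborSet ((g ^ k) v) = Γ.neighborSet v := by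
  ext x
  simp only [SimpleGraph.mem_neighborSet]
  constructor
  · intro hadj
    have hx : (g ^ k) ((g ^ k).symm x) = x := Equiv.apply_symm_apply _ x
    have h1 : Γ.Adj v ((g ^ k).symm x) := by
      refine (myPow_adj hg k v _).1 ?_
      rwa [hx]
    have h2 := hfix _ h1
    rw [h2] at hx
    rwa [← hx]
  · intro hadj
    have h2 := hfix _ hadj
    have := (myPow_adj hg k v x).2 hadj
    rwa [h2] at this

/-- the "no-twin" divisibility: ratio-3 forces `ℓ v ∣ ℓ w` and all neighbours in w's orbit -/
private lemma myNT_dvd (hcubic : ∀ v : V, (Γ.neighborSet v).ncard = 3)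
    (hg : ∀ a b : V, Γ.Adj (g a) (g b) ↔ Γ.Adj a b)
    (NT : ∀ u u' : V, Γ.neighborSet u = Γ.neighborSet u' → u = u')
    {v w : V} (h : Γ.Adj v w)
    (h3 : minimalPeriod (⇑g) w
        = 3 * Nat.gcd (minimalPeriod (⇑g) v) (minimalPeriod (⇑g) w)) :
    minimalPeriod (⇑g) v ∣ minimalPeriod (⇑g) w ∧
      (∀ x ∈ Γ.neighborSet v, minimalPeriod (⇑g) x = minimalPeriod (⇑g) w) := by
  have hall := myQ3_rigid hcubic hg h h3
  have hper : ∀ x ∈ Γ.neighborSet v, minimalPeriod (⇑g) x = minimalPeriod (⇑g) w := by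
    intro x hx
    rcases hall x hx with ⟨k, rfl⟩
    exact myMP_pow_apply w _
  refine ⟨?_, hper⟩
  have hfix : ∀ x ∈ Γ.neighborSet v, (g ^ (minimalPeriod (⇑g) w)) x = x := by
    intro x hx
    rw [myPow_fix_iff, hper x hx]
  have := myNbhd_eq hg hfix
  have heq := NT _ _ this
  rw [myPow_fix_iff] at heq
  exact heq

/-- Ratio classification for adjacent vertices, assuming no twins. -/
private lemma myRatio (hcubic : ∀ v : V, (Γ.neighborSet v).ncard = 3)
    (hg : ∀ a b : V, Γ.Adj (g a) (g b) ↔ Γ.Adj a b)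
    (NT : ∀ u u' : V, Γ.neighborSet u = Γ.neighborSet u' → u = u')
    {v w : V} (h : Γ.Adj v w) :
    minimalPeriod (⇑g) w = minimalPeriod (⇑g) v ∨
    minimalPeriod (⇑g) w = 2 * minimalPeriod (⇑g) v ∨
    minimalPeriod (⇑g) v = 2 * minimalPeriod (⇑g) w ∨
    minimalPeriod (⇑g) w = 3 * minimalPeriod (⇑g) v ∨
    minimalPeriod (⇑g) v = 3 * minimalPeriod (⇑g) w := by
  set a := minimalPeriod (⇑g) v with ha
  set b := minimalPeriod (⇑g) w with hb
  set d := Nat.gcd a b with hd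
  have ha0 : 0 < a := myMP_pos v
  have hb0 : 0 < b := myMP_pos w
  have hd0 : 0 < d := Nat.gcd_pos_of_pos_left _ ha0
  obtain ⟨p, hp⟩ : d ∣ a := Nat.gcd_dvd_left a b
  obtain ⟨q, hq⟩ : d ∣ b := Nat.gcd_dvd_right a b
  have hqle : b ≤ 3 * d := myQ_le3 hcubic hg h
  have hple : a ≤ 3 * d := by
    have := myQ_le3 hcubic hg h.symm
    rwa [Nat.gcd_comm b a, ← hd, ← ha] at this
  have hp0 : 0 < p := by
    rcases Nat.eq_zero_or_pos p with h0 | h0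
    · rw [h0, Nat.mul_zero] at hp; omega
    · exact h0
  have hq0 : 0 < q := by
    rcases Nat.eq_zero_or_pos q with h0 | h0
    · rw [h0, Nat.mul_zero] at hq; omega
    · exact h0
  have hp3 : p ≤ 3 := by
    have : d * p ≤ d * 3 := by rw [← hp]; omega
    exact Nat.le_of_mul_le_mul_left this hd0
  have hq3 : q ≤ 3 := by
    have : d * q ≤ d * 3 := by rw [← hq]; omega
    exact Nat.le_of_mul_le_mul_left this hd0
  have hco : Nat.Coprime p q := by
    have hcop := Nat.coprime_div_gcd_div_gcd (m := a) (n := b) (by rw [← hd]; exact hd0)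
    have h1 : a / Nat.gcd a b = p := by rw [← hd, hp]; exact Nat.mul_div_cancel_left _ hd0
    have h2 : b / Nat.gcd a b = q := by rw [← hd, hq]; exact Nat.mul_div_cancel_left _ hd0
    rwa [h1, h2] at hcop
  have hNT1 : q = 3 → p = 2 → False := by
    intro hq' hp'
    subst hq' hp'
    have h3 : b = 3 * Nat.gcd a b := by rw [← hd]; omega
    obtain ⟨hdvd, -⟩ := myNT_dvd hcubic hg NT h h3
    rcases hdvd with ⟨c, hc⟩
    rw [← ha, ← hb] at hc
    rw [hp, hq, mul_assoc] at hc
    have := Nat.eq_of_mul_eq_mul_left hd0 hc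
    omega
  have hNT2 : p = 3 → q = 2 → False := by
    intro hp' hq'
    subst hp' hq'
    have hgc : Nat.gcd b a = d := by rw [Nat.gcd_comm]
    have h3 : a = 3 * Nat.gcd b a := by rw [hgc]; omega
    obtain ⟨hdvd, -⟩ := myNT_dvd hcubic hg NT h.symm h3
    rcases hdvd with ⟨c, hc⟩
    rw [← ha, ← hb] at hc
    rw [hp, hq, mul_assoc] at hc
    have := Nat.eq_of_mul_eq_mul_left hd0 hc
    omega
  interval_cases p <;> interval_cases q <;>
    first
      | omega
      | (exact (hNT1 rfl rfl).elim)
      | (exact (hNT2 rfl rfl).elim)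
      | (exact absurd hco (by decide))

/-- "absorbed": some neighbour's orbit is three times larger; then ALL neighbours are in
that orbit. -/
private lemma myAbs_all (hcubic : ∀ v : V, (Γ.neighborSet v).ncard = 3)
    (hg : ∀ a b : V, Γ.Adj (g a) (g b) ↔ Γ.Adj a b)
    {v w : V} (hw : w ∈ Γ.neighborSet v)
    (h3 : minimalPeriod (⇑g) w = 3 * minimalPeriod (⇑g) v) :
    ∀ x ∈ Γ.neighborSet v, minimalPeriod (⇑g) x = 3 * minimalPeriod (⇑g) v := by
  have hgcd : Nat.gcd (minimalPeriod (⇑g) v) (minimalPeriod (⇑g) w)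
      = minimalPeriod (⇑g) v := by
    rw [h3]; exact Nat.gcd_eq_left ⟨3, by ring⟩
  have h3' : minimalPeriod (⇑g) w
      = 3 * Nat.gcd (minimalPeriod (⇑g) v) (minimalPeriod (⇑g) w) := by rw [hgcd, h3]
  intro x hx
  rcases myQ3_rigid hcubic hg hw h3' x hx with ⟨k, rfl⟩
  rw [myMP_pow_apply, h3]

private noncomputable def myPsi (Γ : SimpleGraph V) (g : Equiv.Perm V) (v : V) : ℕ :=
  letI := Classical.propDecidable
  if (∃ w ∈ Γ.neighborSet v, minimalPeriod (⇑g) w = 3 * minimalPeriod (⇑g) v)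
  then (minimalPeriod (⇑g) v).factorization 3 + 1
  else (minimalPeriod (⇑g) v).factorization 3

private lemma myPsi_of_abs {v w : V} (hw : w ∈ Γ.neighborSet v)
    (h3 : minimalPeriod (⇑g) w = 3 * minimalPeriod (⇑g) v) :
    myPsi Γ g v = (minimalPeriod (⇑g) v).factorization 3 + 1 := by
  unfold myPsi
  rw [if_pos ⟨w, hw, h3⟩]

private lemma myPsi_of_not_abs {v : V}
    (h : ¬ ∃ w ∈ Γ.neighborSet v, minimalPeriod (⇑g) w = 3 * minimalPeriod (⇑g) v) :
    myPsi Γ g v = (minimalPeriod (⇑g) v).factorization 3 := by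
  unfold myPsi
  rw [if_neg h]

private lemma myF3_le_psi (v : V) :
    (minimalPeriod (⇑g) v).factorization 3 ≤ myPsi Γ g v := by
  unfold myPsi
  split <;> omega

/-- ψ is constant along edges (assuming no twins) -/
private lemma myPsi_adj (hcubic : ∀ v : V, (Γ.neighborSet v).ncard = 3)
    (hg : ∀ a b : V, Γ.Adj (g a) (g b) ↔ Γ.Adj a b)
    (NT : ∀ u u' : V, Γ.neighborSet u = Γ.neighborSet u' → u = u')
    {v w : V} (h : Γ.Adj v w) : myPsi Γ g v = myPsi Γ g w := by
  have hv0 : 0 < minimalPeriod (⇑g) v := myMP_pos v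
  have hw0 : 0 < minimalPeriod (⇑g) w := myMP_pos w
  have hvw : w ∈ Γ.neighborSet v := h
  have hwv : v ∈ Γ.neighborSet w := h.symm
  -- helper to rule out absorbedness
  have habs : ∀ {x y : V}, y ∈ Γ.neighborSet x →
      minimalPeriod (⇑g) y ≠ 3 * minimalPeriod (⇑g) x →
      (∃ z ∈ Γ.neighborSet x, minimalPeriod (⇑g) z = 3 * minimalPeriod (⇑g) x) → False := by
    intro x y hy hne ⟨z, hz, h3⟩
    exact hne (myAbs_all hcubic hg hz h3 y hy)
  rcases myRatio hcubic hg NT h with h1 | h2 | h2' | h3 | h3'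
  · -- equal periods
    have hnv : ¬ ∃ z ∈ Γ.neighborSet v, minimalPeriod (⇑g) z = 3 * minimalPeriod (⇑g) v :=
      fun hx => habs hvw (by omega) hx
    have hnw : ¬ ∃ z ∈ Γ.neighborSet w, minimalPeriod (⇑g) z = 3 * minimalPeriod (⇑g) w :=
      fun hx => habs hwv (by omega) hx
    rw [myPsi_of_not_abs hnv, myPsi_of_not_abs hnw, h1]
  · -- ℓ w = 2 ℓ v
    have hnv : ¬ ∃ z ∈ Γ.neighborSet v, minimalPeriod (⇑g) z = 3 * minimalPeriod (⇑g) v :=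
      fun hx => habs hvw (by omega) hx
    have hnw : ¬ ∃ z ∈ Γ.neighborSet w, minimalPeriod (⇑g) z = 3 * minimalPeriod (⇑g) w :=
      fun hx => habs hwv (by omega) hx
    rw [myPsi_of_not_abs hnv, myPsi_of_not_abs hnw, h2]
    rw [Nat.factorization_mul (by norm_num) hv0.ne']
    simp [Nat.prime_two.factorization, Finsupp.single_apply]
  · -- ℓ v = 2 ℓ w
    have hnv : ¬ ∃ z ∈ Γ.neighborSet v, minimalPeriod (⇑g) z = 3 * minimalPeriod (⇑g) v :=
      fun hx => habs hvw (by omega) hx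
    have hnw : ¬ ∃ z ∈ Γ.neighborSet w, minimalPeriod (⇑g) z = 3 * minimalPeriod (⇑g) w :=
      fun hx => habs hwv (by omega) hx
    rw [myPsi_of_not_abs hnv, myPsi_of_not_abs hnw, h2']
    rw [Nat.factorization_mul (by norm_num) hw0.ne']
    simp [Nat.prime_two.factorization, Finsupp.single_apply]
  · -- ℓ w = 3 ℓ v : v absorbed, w not absorbed
    have hnw : ¬ ∃ z ∈ Γ.neighborSet w, minimalPeriod (⇑g) z = 3 * minimalPeriod (⇑g) w :=
      fun hx => habs hwv (by omega) hx
    rw [myPsi_of_abs hvw h3, myPsi_of_not_abs hnw, h3]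
    rw [Nat.factorization_mul (by norm_num) hv0.ne']
    simp [Nat.prime_three.factorization, Finsupp.single_apply]
    omega
  · -- ℓ v = 3 ℓ w
    have hnv : ¬ ∃ z ∈ Γ.neighborSet v, minimalPeriod (⇑g) z = 3 * minimalPeriod (⇑g) v :=
      fun hx => habs hvw (by omega) hx
    rw [myPsi_of_abs hwv h3', myPsi_of_not_abs hnv, h3']
    rw [Nat.factorization_mul (by norm_num) hw0.ne']
    simp [Nat.prime_three.factorization, Finsupp.single_apply]
    omega

/-- factorization at a prime ≠ 2,3 is constant along edges -/
private lemma myFp_adj (hcubic : ∀ v : V, (Γ.neighborSet v).ncard = 3)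
    (hg : ∀ a b : V, Γ.Adj (g a) (g b) ↔ Γ.Adj a b)
    (NT : ∀ u u' : V, Γ.neighborSet u = Γ.neighborSet u' → u = u')
    {p : ℕ} (hp2 : p ≠ 2) (hp3 : p ≠ 3)
    {v w : V} (h : Γ.Adj v w) :
    (minimalPeriod (⇑g) v).factorization p = (minimalPeriod (⇑g) w).factorization p := by
  have hv0 : 0 < minimalPeriod (⇑g) v := myMP_pos v
  have hw0 : 0 < minimalPeriod (⇑g) w := myMP_pos w
  rcases myRatio hcubic hg NT h with h1 | h2 | h2' | h3 | h3' <;>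
    [skip; skip; skip; skip; skip]
  · rw [h1]
  · rw [h2, Nat.factorization_mul (by norm_num) hv0.ne']
    simp [Nat.prime_two.factorization, Finsupp.single_apply, hp2.symm]
  · rw [h2', Nat.factorization_mul (by norm_num) hw0.ne']
    simp [Nat.prime_two.factorization, Finsupp.single_apply, hp2.symm]
  · rw [h3, Nat.factorization_mul (by norm_num) hv0.ne']
    simp [Nat.prime_three.factorization, Finsupp.single_apply, hp3.symm]
  · rw [h3', Nat.factorization_mul (by norm_num) hw0.ne']
    simp [Nat.prime_three.factorization, Finsupp.single_apply, hp3.symm]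

/-- constancy along connected graph -/
private lemma myConst (hconn : Γ.Connected) (f : V → ℕ)
    (hadj : ∀ {v w : V}, Γ.Adj v w → f v = f w) (v w : V) : f v = f w := by
  obtain ⟨p⟩ := hconn.preconnected v w
  induction p with
  | nil => rfl
  | cons h q ih => exact (hadj h).trans ih

/-- the order of g divides the lcm of all minimal periods -/
private lemma myOrder_dvd_lcm :
    orderOf g ∣ Finset.univ.lcm (fun v : V => minimalPeriod (⇑g) v) := by
  apply orderOf_dvd_of_pow_eq_one
  ext v
  have hv : minimalPeriod (⇑g) v ∣ Finset.univ.lcm (fun v : V => minimalPeriod (⇑g) v) :=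
    Finset.dvd_lcm (Finset.mem_univ v)
  have : (g ^ Finset.univ.lcm (fun v : V => minimalPeriod (⇑g) v)) v = v := by
    rw [myPow_fix_iff]; exact hv
  simpa using this

/-- factorization of a finset lcm is bounded by the sup of factorizations -/
private lemma myLcm_fact {ι : Type*} (p : ℕ) (s : Finset ι) (f : ι → ℕ)
    (hf : ∀ i, f i ≠ 0) :
    (s.lcm f).factorization p ≤ s.sup fun i => (f i).factorization p := by
  classical
  induction s using Finset.induction with
  | empty => simp
  | insert a t hx ih =>
    rw [Finset.lcm_insert, Finset.sup_insert]
    have ht0 : t.lcm f ≠ 0 := by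
      intro h0
      rw [Finset.lcm_eq_zero_iff] at h0
      rcases h0 with ⟨i, _, hi⟩
      exact hf i hi
    have hl : lcm (f a) (t.lcm f) = Nat.lcm (f a) (t.lcm f) := rfl
    rw [hl, Nat.factorization_lcm (hf a) ht0]
    rw [Finsupp.sup_apply]
    exact sup_le_sup le_rfl ih

/-- minimal period is at most the number of points -/
private lemma myMP_le_card (x : V) : minimalPeriod (⇑g) x ≤ Fintype.card V := by
  classical
  have key : ∀ i j : ℕ, i < j → j < minimalPeriod (⇑g) x → (g ^ i) x ≠ (g ^ j) x := by
    intro i j hlt hj he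
    have h1 : (g ^ (j - i)) ((g ^ i) x) = (g ^ i) x := by
      rw [← Equiv.Perm.mul_apply, ← pow_add, show j - i + i = j by omega, ← he]
    rw [myPow_fix_iff, myMP_pow_apply] at h1
    have := Nat.le_of_dvd (by omega) h1
    omega
  have hinj : Set.InjOn (fun i => (g ^ i) x) (Finset.range (minimalPeriod (⇑g) x)) := by
    intro i hi j hj hij
    simp only [Finset.coe_range, Set.mem_Iio] at hi hj
    rcases lt_trichotomy i j with hc | hc | hc
    · exact absurd hij (key i j hc hj)
    · exact hc
    · exact absurd hij.symm (key j i hc hi)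
  have := Finset.card_le_card_of_injOn (fun i => (g ^ i) x)
    (fun i _ => Finset.mem_univ _) hinj
  simpa using this

/-- Main lemma in the twin-free case. -/
private lemma myNoTwinMain (hconn : Γ.Connected)
    (hcubic : ∀ v : V, (Γ.neighborSet v).ncard = 3)
    (hg : ∀ a b : V, Γ.Adj (g a) (g b) ↔ Γ.Adj a b)
    (NT : ∀ u u' : V, Γ.neighborSet u = Γ.neighborSet u' → u = u') :
    orderOf g ≤ Fintype.card V := by
  classical
  have hne : Nonempty V := hconn.nonempty
  obtain ⟨u, -, hu⟩ := Finset.exists_max_image Finset.univ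
    (fun v => (minimalPeriod (⇑g) v).factorization 2) Finset.univ_nonempty
  -- produce a "core" vertex x with maximal 2-part whose ψ equals its 3-part
  obtain ⟨x, hx2, hx3⟩ : ∃ x : V,
      (minimalPeriod (⇑g) x).factorization 2 = (minimalPeriod (⇑g) u).factorization 2 ∧
      myPsi Γ g x = (minimalPeriod (⇑g) x).factorization 3 := by
    by_cases habs : ∃ w ∈ Γ.neighborSet u,
        minimalPeriod (⇑g) w = 3 * minimalPeriod (⇑g) u
    · obtain ⟨w, hw, h3⟩ := habs
      refine ⟨w, ?_, ?_⟩
      · rw [h3, Nat.factorization_mul (by norm_num) (myMP_pos u).ne']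
        simp [Nat.prime_three.factorization, Finsupp.single_apply]
      · apply myPsi_of_not_abs
        rintro ⟨z, hz, h3'⟩
        have huw : u ∈ Γ.neighborSet w := (SimpleGraph.mem_neighborSet _ _ _).2
          ((SimpleGraph.mem_neighborSet _ _ _).1 hw).symm
        have := myAbs_all hcubic hg hz h3' u huw
        have h1 := myMP_pos (g := g) u
        omega
    · exact ⟨u, rfl, myPsi_of_not_abs habs⟩
  -- every prime-power in (orderOf g) appears in minimalPeriod x
  have hkey : ∀ p : ℕ, (orderOf g).factorization p
      ≤ (minimalPeriod (⇑g) x).factorization p := by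
    intro p
    have hlcm0 : Finset.univ.lcm (fun v : V => minimalPeriod (⇑g) v) ≠ 0 := by
      intro h0
      rw [Finset.lcm_eq_zero_iff] at h0
      rcases h0 with ⟨z, -, hz⟩
      exact absurd hz.symm ((myMP_pos (g := g) z).ne)
    have h1 : (orderOf g).factorization p
        ≤ (Finset.univ.lcm (fun v : V => minimalPeriod (⇑g) v)).factorization p := by
      have := (Nat.factorization_le_iff_dvd (orderOf_pos g).ne' hlcm0).2 myOrder_dvd_lcm
      exact Finsupp.le_def.1 this p
    obtain ⟨z, -, hz⟩ := Finset.exists_mem_eq_sup Finset.univ Finset.univ_nonempty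
      (fun v : V => (minimalPeriod (⇑g) v).factorization p)
    have h2 := myLcm_fact p Finset.univ (fun v : V => minimalPeriod (⇑g) v)
      (fun v => (myMP_pos v).ne')
    rw [hz] at h2
    have h3 : (minimalPeriod (⇑g) z).factorization p
        ≤ (minimalPeriod (⇑g) x).factorization p := by
      by_cases hp2 : p = 2
      · subst hp2
        rw [hx2]
        exact hu z (Finset.mem_univ z)
      by_cases hp3 : p = 3
      · subst hp3
        rw [← hx3]
        calc (minimalPeriod (⇑g) z).factorization 3 ≤ myPsi Γ g z := myF3_le_psi z
          _ = myPsi Γ g x := myConst hconn (myPsi Γ g)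
                (fun h => myPsi_adj hcubic hg NT h) z x
      · exact le_of_eq (myConst hconn (fun v => (minimalPeriod (⇑g) v).factorization p)
          (fun h => myFp_adj hcubic hg NT hp2 hp3 h) z x)
    exact le_trans h1 (le_trans h2 h3)
  have hdvd : orderOf g ∣ minimalPeriod (⇑g) x :=
    (Nat.factorization_le_iff_dvd (orderOf_pos g).ne' (myMP_pos x).ne').1
      (Finsupp.le_def.2 hkey)
  exact le_trans (Nat.le_of_dvd (myMP_pos x) hdvd) (myMP_le_card x)

/-- lcm of a multiset of naturals, each ≥ 2, of sum ≤ 6, is at most 6 -/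
private lemma myMlcm (s : Multiset ℕ) (h2 : ∀ a ∈ s, 2 ≤ a) (hs : s.sum ≤ 6) :
    s.lcm ≤ 6 := by
  have hcard : Multiset.card s ≤ 3 := by
    have := Multiset.card_nsmul_le_sum (s := s) (a := 2) h2
    simp only [smul_eq_mul] at this
    omega
  interval_cases hc : (Multiset.card s)
  · rw [Multiset.card_eq_zero] at hc
    subst hc
    simp [Multiset.lcm_zero]
  · rw [Multiset.card_eq_one] at hc
    obtain ⟨a, rfl⟩ := hc
    have := h2 a (by simp)
    have hsum : a ≤ 6 := by simpa using hs
    simpa [Multiset.lcm_singleton] using hsum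
  · rw [Multiset.card_eq_two] at hc
    obtain ⟨a, b, rfl⟩ := hc
    have ha2 := h2 a (by simp)
    have hb2 := h2 b (by simp)
    have hsum : a + b ≤ 6 := by simpa using hs
    have ha4 : a ≤ 4 := by omega
    have hb4 : b ≤ 4 := by omega
    have : ({a, b} : Multiset ℕ).lcm = Nat.lcm a (Nat.lcm b 1) := by
      simp [Multiset.lcm_cons, Multiset.lcm_zero]
      rfl
    rw [this]
    interval_cases a <;> interval_cases b <;> simp_all <;> decide
  · rw [Multiset.card_eq_three] at hc
    obtain ⟨a, b, c, rfl⟩ := hc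
    have ha2 := h2 a (by simp)
    have hb2 := h2 b (by simp)
    have hc2 := h2 c (by simp)
    have hsum : a + (b + c) ≤ 6 := by simpa using hs
    have ha : a = 2 := by omega
    have hb : b = 2 := by omega
    have hcc : c = 2 := by omega
    subst ha hb hcc
    have : ({2, 2, 2} : Multiset ℕ).lcm = Nat.lcm 2 (Nat.lcm 2 (Nat.lcm 2 1)) := by
      simp [Multiset.lcm_cons, Multiset.lcm_zero]
    rw [this]
    decide

/-- any permutation of a 6-element type has order ≤ 6 -/
private lemma myOrder6 (h6 : Fintype.card V = 6) (σ : Equiv.Perm V) : orderOf σ ≤ 6 := by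
  classical
  rw [← Equiv.Perm.lcm_cycleType]
  apply myMlcm
  · exact fun a ha => Equiv.Perm.two_le_of_mem_cycleType ha
  · rw [Equiv.Perm.sum_cycleType]
    calc σ.support.card ≤ Fintype.card V := Finset.card_le_univ _
      _ = 6 := h6

/-- an automorphism maps neighbourhoods to neighbourhoods -/
private lemma myNbhd_map {h : Equiv.Perm V}
    (hh : ∀ a b : V, Γ.Adj (h a) (h b) ↔ Γ.Adj a b) (a : V) :
    Γ.neighborSet (h a) = h '' Γ.neighborSet a := by
  ext x
  simp only [SimpleGraph.mem_neighborSet, Set.mem_image]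
  constructor
  · intro hadj
    refine ⟨h.symm x, ?_, Equiv.apply_symm_apply _ _⟩
    have : Γ.Adj (h a) (h (h.symm x)) := by rwa [Equiv.apply_symm_apply]
    exact (hh a (h.symm x)).1 this
  · rintro ⟨y, hy, rfl⟩
    exact (hh a y).2 hy

/-- four distinct vertices cannot all be neighbours of v -/
private lemma myFour (hcubic : ∀ v : V, (Γ.neighborSet v).ncard = 3)
    {v x1 x2 x3 x4 : V}
    (h1 : x1 ∈ Γ.neighborSet v) (h2 : x2 ∈ Γ.neighborSet v)
    (h3 : x3 ∈ Γ.neighborSet v) (h4 : x4 ∈ Γ.neighborSet v)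
    (h12 : x1 ≠ x2) (h13 : x1 ≠ x3) (h14 : x1 ≠ x4)
    (h23 : x2 ≠ x3) (h24 : x2 ≠ x4) (h34 : x3 ≠ x4) : False := by
  classical
  have hsub : ↑({x1, x2, x3, x4} : Finset V) ⊆ Γ.neighborSet v := by
    intro z hz
    simp only [Finset.coe_insert, Set.mem_insert_iff, Finset.coe_singleton,
      Set.mem_singleton_iff] at hz
    rcases hz with rfl | rfl | rfl | rfl <;> assumption
  have hcard : ({x1, x2, x3, x4} : Finset V).card = 4 := by
    rw [Finset.card_insert_of_notMem (by simp [h12, h13, h14]),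
      Finset.card_insert_of_notMem (by simp [h23, h24]),
      Finset.card_insert_of_notMem (by simp [h34]),
      Finset.card_singleton]
  have := Set.ncard_le_ncard hsub (Set.toFinite _)
  rw [Set.ncard_coe_finset, hcard, hcubic v] at this
  omega

/-- in the twin case, the graph has exactly 6 vertices -/
private lemma myTwinCard (hconn : Γ.Connected)
    (hcubic : ∀ v : V, (Γ.neighborSet v).ncard = 3)
    (hvt : ∀ u v : V, ∃ h : Equiv.Perm V,
      (∀ a b : V, Γ.Adj (h a) (h b) ↔ Γ.Adj a b) ∧ h u = v)
    (htwin : ∃ u u' : V, u ≠ u' ∧ Γ.neighborSet u = Γ.neighborSet u') :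
    Fintype.card V = 6 := by
  classical
  obtain ⟨u0, u1, hne01, hN01⟩ := htwin
  -- every vertex has a twin
  have htw : ∀ v : V, ∃ v', v' ≠ v ∧ Γ.neighborSet v' = Γ.neighborSet v := by
    intro v
    obtain ⟨h, hh, hmap⟩ := hvt u0 v
    refine ⟨h u1, ?_, ?_⟩
    · intro he
      rw [← hmap] at he
      exact hne01 (h.injective he).symm
    · rw [← hmap, myNbhd_map hh, myNbhd_map hh, hN01]
  -- any two members of a common neighbourhood are twins
  have hkey : ∀ v x y : V, x ∈ Γ.neighborSet v → y ∈ Γ.neighborSet v →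
      Γ.neighborSet x = Γ.neighborSet y := by
    intro v x y hx hy
    by_contra hne
    obtain ⟨x', hx'ne, hx'N⟩ := htw x
    obtain ⟨y', hy'ne, hy'N⟩ := htw y
    have hx' : x' ∈ Γ.neighborSet v := by
      have hvx : v ∈ Γ.neighborSet x := hx.symm
      rw [← hx'N] at hvx
      exact hvx.symm
    have hy' : y' ∈ Γ.neighborSet v := by
      have hvy : v ∈ Γ.neighborSet y := hy.symm
      rw [← hy'N] at hvy
      exact hvy.symm
    have hxy : x ≠ y := fun he => hne (he ▸ rfl)
    have hxy' : x ≠ y' := fun he => hne (by rw [he, hy'N])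
    have hx'y : x' ≠ y := fun he => hne (by rw [← hx'N, he])
    have hx'y' : x' ≠ y' := fun he => hne (by rw [← hx'N, he, hy'N])
    exact myFour hcubic hx hx' hy hy' (Ne.symm hx'ne) hxy hxy' hx'y hx'y' hy'ne.symm
  obtain ⟨v0⟩ := hconn.nonempty
  obtain ⟨u, hu⟩ : (Γ.neighborSet v0).Nonempty := by
    apply Set.nonempty_of_ncard_ne_zero
    rw [hcubic v0]
    omega
  have hv0u : v0 ∈ Γ.neighborSet u := hu.symm
  have hST : ∀ x ∈ Γ.neighborSet v0, Γ.neighborSet x = Γ.neighborSet u :=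
    fun x hx => hkey v0 x u hx hu
  have hTS : ∀ y ∈ Γ.neighborSet u, Γ.neighborSet y = Γ.neighborSet v0 :=
    fun y hy => hkey u y v0 hy hv0u
  -- closure under walks
  have hwalk : ∀ (a b : V), Γ.Walk a b →
      a ∈ Γ.neighborSet v0 ∪ Γ.neighborSet u → b ∈ Γ.neighborSet v0 ∪ Γ.neighborSet u := by
    intro a b p
    induction p with
    | nil => exact id
    | cons hadj q ih =>
      rename_i c d e
      intro hc
      apply ih
      rcases hc with hc | hc
      · right
        rw [← hST c hc]
        exact hadj
      · left
        rw [← hTS c hc]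
        exact hadj
  have hcl : ∀ z : V, z ∈ Γ.neighborSet v0 ∪ Γ.neighborSet u := by
    intro z
    obtain ⟨p⟩ := hconn.preconnected v0 z
    exact hwalk v0 z p (Or.inr hv0u)
  have hdisj : Disjoint (Γ.neighborSet v0) (Γ.neighborSet u) := by
    rw [Set.disjoint_left]
    intro z hzS hzT
    have : Γ.neighborSet z = Γ.neighborSet u := hST z hzS
    rw [← this] at hzT
    exact Γ.irrefl hzT
  have huniv : (Set.univ : Set V) = Γ.neighborSet v0 ∪ Γ.neighborSet u :=
    Set.eq_univ_of_forall hcl |>.symm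
  have : Fintype.card V = (Set.univ : Set V).ncard := by
    rw [Set.ncard_univ, Nat.card_eq_fintype_card]
  rw [this, huniv, Set.ncard_union_eq hdisj (Set.toFinite _) (Set.toFinite _),
    hcubic v0, hcubic u]

end Aux

/-- For every finite simple connected vertex-transitive cubic graph Γ,
no automorphism of Γ has order exceeding the number of vertices (η(Γ) ≥ 1). -/
theorem stmt_0 {V : Type*} [Fintype V] (Γ : SimpleGraph V)
    (hconn : Γ.Connected)
    (hcubic : ∀ v : V, (Γ.neighborSet v).ncard = 3)
    (hvt : ∀ u v : V, ∃ g : Equiv.Perm V,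
      (∀ a b : V, Γ.Adj (g a) (g b) ↔ Γ.Adj a b) ∧ g u = v)
    (g : Equiv.Perm V) (hg : ∀ a b : V, Γ.Adj (g a) (g b) ↔ Γ.Adj a b) :
    orderOf g ≤ Fintype.card V := by
  classical
  by_cases htwin : ∃ u u' : V, u ≠ u' ∧ Γ.neighborSet u = Γ.neighborSet u'
  · have h6 := myTwinCard hconn hcubic hvt htwin
    calc orderOf g ≤ 6 := myOrder6 h6 g
      _ = Fintype.card V := h6.symm
  · push_neg at htwin
    have NT : ∀ u u' : V, Γ.neighborSet u = Γ.neighborSet u' → u = u' := by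
      intro u u' hN
      by_contra hne
      exact htwin u u' hne hN
    exact myNoTwinMain hconn hcubic hg NT
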